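/- arXiv:2508.08853 — 3 statements merged into one kernel-verified Lean document; each statement's English description precedes it below -/
import Mathlib

section
/- Let G be a connected non-complete graph of order at least 3 and let H be a connected graph of order m. Let k be the maximum integer such that there exists a minimum vertex cut A ⊆ V(G) of G with the property that every connected component of G − A contains at least k+1 vertices. Then for every nonnegative integer g with g+1 ≤ (k+1) + k·m + δ(G)·m, one has κ_g(G ◇ H) = 1 if and only if κ(G) = 1. -/
open SimpleGraph

namespace ExtraConn

variable {V W : Type*}

/-- `S` is an `R_g` vertex cut: deleting `S` disconnects the graph and every
connected component of the remainder has at least `g+1` vertices. -/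
def IsRgVertexCut (G : SimpleGraph V) (g : ℕ) (S : Set V) : Prop :=
  ¬ (G.induce Sᶜ).Preconnected ∧
    ∀ c : (G.induce Sᶜ).ConnectedComponent,
      g + 1 ≤ Nat.card {v : ↥Sᶜ // (G.induce Sᶜ).connectedComponentMk v = c}

/-- The `g`-extra vertex connectivity `κ_g(G)` (`⊤` if no `R_g` vertex cut exists). -/
noncomputable def kappaG (G : SimpleGraph V) (g : ℕ) : ℕ∞ :=
  sInf {n : ℕ∞ | ∃ S : Finset V, IsRgVertexCut G g ↑S ∧ (S.card : ℕ∞) = n}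

/-- `S` is a vertex cut of `G`. -/
def IsVertexCut (G : SimpleGraph V) (S : Set V) : Prop :=
  ¬ (G.induce Sᶜ).Preconnected

/-- The vertex connectivity `κ(G)` (for graphs admitting a vertex cut). -/
noncomputable def kappa (G : SimpleGraph V) : ℕ :=
  sInf {n : ℕ | ∃ S : Finset V, IsVertexCut G ↑S ∧ S.card = n}

/-- `S` is a minimum vertex cut of `G`. -/
def IsMinVertexCut (G : SimpleGraph V) (S : Finset V) : Prop :=
  IsVertexCut G ↑S ∧ S.card = kappa G

/-- Deleting the vertex set `↑A` leaves only components with at least `k+1` vertices. -/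
def CutBound (G : SimpleGraph V) (A : Finset V) (k : ℕ) : Prop :=
  ∀ c : (G.induce (↑A : Set V)ᶜ).ConnectedComponent,
    k + 1 ≤ Nat.card {v // (G.induce (↑A : Set V)ᶜ).connectedComponentMk v = c}

/-- `F` is an `R_g` edge cut. -/
def IsRgEdgeCut (G : SimpleGraph V) (g : ℕ) (F : Set (Sym2 V)) : Prop :=
  F ⊆ G.edgeSet ∧ ¬ (G.deleteEdges F).Preconnected ∧
    ∀ c : (G.deleteEdges F).ConnectedComponent,
      g + 1 ≤ Nat.card {v : V // (G.deleteEdges F).connectedComponentMk v = c}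

/-- The `g`-extra edge connectivity `λ_g(G)`. -/
noncomputable def lambdaG (G : SimpleGraph V) (g : ℕ) : ℕ∞ :=
  sInf {n : ℕ∞ | ∃ F : Finset (Sym2 V), IsRgEdgeCut G g ↑F ∧ (F.card : ℕ∞) = n}

/-- The edge connectivity `λ(G)`. -/
noncomputable def lambda (G : SimpleGraph V) : ℕ :=
  sInf {n : ℕ | ∃ F : Finset (Sym2 V), ↑F ⊆ G.edgeSet ∧
    ¬ (G.deleteEdges ↑F).Preconnected ∧ F.card = n}

/-- The edge corona `G ◇ H`. -/
def edgeCorona (G : SimpleGraph V) (H : SimpleGraph W) :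
    SimpleGraph (V ⊕ (G.edgeSet × W)) where
  Adj a b :=
    match a, b with
    | .inl u, .inl v => G.Adj u v
    | .inl u, .inr ew => u ∈ (ew.1 : Sym2 V)
    | .inr ew, .inl v => v ∈ (ew.1 : Sym2 V)
    | .inr ew, .inr ew' => ew.1 = ew'.1 ∧ H.Adj ew.2 ew'.2
  symm := by
    constructor
    rintro (u | ⟨e, w⟩) (v | ⟨e', w'⟩) h
    · exact h.symm
    · exact h
    · exact h
    · exact ⟨h.1.symm, h.2.symm⟩
  loopless := by
    constructor
    rintro (u | ⟨e, w⟩) h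
    · exact G.loopless.irrefl u h
    · exact H.loopless.irrefl w h.2

/-- The neighbourhood corona `G * H`. -/
def neighbourhoodCorona (G : SimpleGraph V) (H : SimpleGraph W) :
    SimpleGraph (V ⊕ (V × W)) where
  Adj a b :=
    match a, b with
    | .inl u, .inl v => G.Adj u v
    | .inl u, .inr iw => G.Adj u iw.1
    | .inr iw, .inl v => G.Adj v iw.1
    | .inr iw, .inr iw' => iw.1 = iw'.1 ∧ H.Adj iw.2 iw'.2
  symm := by
    constructor
    rintro (u | ⟨i, w⟩) (v | ⟨i', w'⟩) h
    · exact h.symm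
    · exact h
    · exact h
    · exact ⟨h.1.symm, h.2.symm⟩
  loopless := by
    constructor
    rintro (u | ⟨i, w⟩) h
    · exact G.loopless.irrefl u h
    · exact H.loopless.irrefl w h.2

/-- The subdivision graph `S(G)`. -/
def subdivision (G : SimpleGraph V) : SimpleGraph (V ⊕ G.edgeSet) where
  Adj a b :=
    match a, b with
    | .inl u, .inr e => u ∈ (e : Sym2 V)
    | .inr e, .inl u => u ∈ (e : Sym2 V)
    | _, _ => False
  symm := by
    constructor
    rintro (u | e) (v | e') h
    · exact h.elim
    · exact h
    · exact h
    · exact h.elim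
  loopless := by
    constructor
    rintro (u | e) h <;> exact h.elim

/-- The subdivision vertex neighbourhood corona `G ⊡ H`. -/
def subdivisionVertexNC (G : SimpleGraph V) (H : SimpleGraph W) :
    SimpleGraph ((V ⊕ G.edgeSet) ⊕ (V × W)) where
  Adj a b :=
    match a, b with
    | .inl x, .inl y => (subdivision G).Adj x y
    | .inl (.inr e), .inr iw => iw.1 ∈ (e : Sym2 V)
    | .inr iw, .inl (.inr e) => iw.1 ∈ (e : Sym2 V)
    | .inr iw, .inr iw' => iw.1 = iw'.1 ∧ H.Adj iw.2 iw'.2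
    | _, _ => False
  symm := by
    constructor
    rintro ((u | e) | ⟨i, w⟩) ((v | e') | ⟨i', w'⟩) h
    · exact h.elim
    · exact h
    · exact h.elim
    · exact h
    · exact h.elim
    · exact h
    · exact h.elim
    · exact h
    · exact ⟨h.1.symm, h.2.symm⟩
  loopless := by
    constructor
    rintro ((u | e) | ⟨i, w⟩) h
    · exact h.elim
    · exact h.elim
    · exact H.loopless.irrefl w h.2

/-- The subdivision edge neighbourhood corona `G ⊟ H`. -/
def subdivisionEdgeNC (G : SimpleGraph V) (H : SimpleGraph W) :
    SimpleGraph ((V ⊕ G.edgeSet) ⊕ (G.edgeSet × W)) where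
  Adj a b :=
    match a, b with
    | .inl x, .inl y => (subdivision G).Adj x y
    | .inl (.inl u), .inr ew => u ∈ (ew.1 : Sym2 V)
    | .inr ew, .inl (.inl u) => u ∈ (ew.1 : Sym2 V)
    | .inr ew, .inr ew' => ew.1 = ew'.1 ∧ H.Adj ew.2 ew'.2
    | _, _ => False
  symm := by
    constructor
    rintro ((u | e) | ⟨e₀, w⟩) ((v | e') | ⟨e₀', w'⟩) h
    · exact h.elim
    · exact h
    · exact h
    · exact h
    · exact h.elim
    · exact h.elim
    · exact h
    · exact h.elim
    · exact ⟨h.1.symm, h.2.symm⟩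
  loopless := by
    constructor
    rintro ((u | e) | ⟨e₀, w⟩) h
    · exact h.elim
    · exact h.elim
    · exact H.loopless.irrefl w h.2

/-- The generalized corona `G ∘ ⋀ᵢ Hᵢ`. -/
def genCorona (G : SimpleGraph V) {W : V → Type*} (H : ∀ v, SimpleGraph (W v)) :
    SimpleGraph (V ⊕ (Σ v, W v)) where
  Adj a b :=
    match a, b with
    | .inl u, .inl v => G.Adj u v
    | .inl u, .inr p => u = p.1
    | .inr p, .inl v => v = p.1
    | .inr p, .inr q =>
        ∃ (v : V) (w w' : W v), p = ⟨v, w⟩ ∧ q = ⟨v, w'⟩ ∧ (H v).Adj w w'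
  symm := by
    constructor
    rintro (u | p) (v | q) h
    · exact h.symm
    · exact h
    · exact h
    · obtain ⟨v, w, w', rfl, rfl, hadj⟩ := h
      exact ⟨v, w', w, rfl, rfl, hadj.symm⟩
  loopless := by
    constructor
    rintro (u | p) h
    · exact G.loopless.irrefl u h
    · obtain ⟨v, w, w', rfl, h2, hadj⟩ := h
      obtain rfl : w = w' := by simpa using h2
      exact (H v).loopless.irrefl w hadj

/-- The rooted product `H(G)` with root `r`. -/
def rootedProduct (G : SimpleGraph V) (H : SimpleGraph W) (r : W) :
    SimpleGraph (V × W) where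
  Adj a b := (a.1 = b.1 ∧ H.Adj a.2 b.2) ∨ (a.2 = r ∧ b.2 = r ∧ G.Adj a.1 b.1)
  symm := by
    constructor
    rintro ⟨x, y⟩ ⟨x', y'⟩ (⟨h1, h2⟩ | ⟨h1, h2, h3⟩)
    · exact Or.inl ⟨h1.symm, h2.symm⟩
    · exact Or.inr ⟨h2, h1, h3.symm⟩
  loopless := by
    constructor
    rintro ⟨x, y⟩ (⟨-, h⟩ | ⟨-, -, h⟩)
    · exact H.loopless.irrefl y h
    · exact G.loopless.irrefl x h



set_option linter.unusedSectionVars false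
set_option linter.unusedVariables false
section Aux

variable {V W : Type*} [Fintype V] [Fintype W] [DecidableEq V]
variable (G : SimpleGraph V) [DecidableRel G.Adj] (H : SimpleGraph W)

lemma adj_of_mem_of_mem {e : Sym2 V} (he : e ∈ G.edgeSet) {u v : V}
    (hu : u ∈ e) (hv : v ∈ e) (hne : u ≠ v) : G.Adj u v := by
  have h : e = s(u, v) := (Sym2.mem_and_mem_iff hne).mp ⟨hu, hv⟩
  rw [h] at he
  exact he

lemma exists_end (x₀ : V) (e : G.edgeSet) :
    ∃ u, u ∈ (e : Sym2 V) ∧ u ≠ x₀ := by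
  obtain ⟨s, hs⟩ := e
  induction s with
  | _ u v =>
    have hne : u ≠ v := fun h => (G.not_isDiag_of_mem_edgeSet hs) (by simp [h])
    by_cases hu : u = x₀
    · exact ⟨v, by simp, by simpa [hu] using hne.symm⟩
    · exact ⟨u, by simp, hu⟩

/-- A chosen endpoint of the edge `e` distinct from `x₀`. -/
noncomputable def pickEnd (x₀ : V) (e : G.edgeSet) : V :=
  (exists_end G x₀ e).choose

lemma pickEnd_mem (x₀ : V) (e : G.edgeSet) : pickEnd G x₀ e ∈ (e : Sym2 V) :=
  (exists_end G x₀ e).choose_spec.1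

lemma pickEnd_ne (x₀ : V) (e : G.edgeSet) : pickEnd G x₀ e ≠ x₀ :=
  (exists_end G x₀ e).choose_spec.2

lemma exists_parent (hG : G.Preconnected) {v x₀ : V} (hne : v ≠ x₀) :
    ∃ p, G.Adj v p ∧ G.dist p x₀ < G.dist v x₀ := by
  obtain ⟨w, hw⟩ := (hG v x₀).exists_walk_length_eq_dist
  cases w with
  | nil => exact absurd rfl hne
  | cons h q =>
    refine ⟨_, h, ?_⟩
    have h1 : G.dist _ x₀ ≤ q.length := SimpleGraph.dist_le q
    have h2 : q.length + 1 = G.dist v x₀ := by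
      simpa [SimpleGraph.Walk.length_cons] using hw
    omega

lemma card_incident (y : V) :
    Nat.card {e : G.edgeSet // y ∈ (e : Sym2 V)} = G.degree y := by
  have e1 : Nat.card {e : G.edgeSet // y ∈ (e : Sym2 V)} = Nat.card (G.incidenceSet y) := by
    refine Nat.card_congr ⟨fun p => ⟨↑p.1, p.1.2, p.2⟩, fun q => ⟨⟨↑q, q.2.1⟩, q.2.2⟩, ?_, ?_⟩
    · intro p; rfl
    · intro q; rfl
  rw [e1, Nat.card_eq_fintype_card, ← Set.toFinset_card]
  rw [show (G.incidenceSet y).toFinset = G.incidenceFinset y from rfl]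
  exact G.card_incidenceFinset_eq_degree y

end Aux

set_option linter.unusedSectionVars false
set_option maxHeartbeats 1000000

section Aux2

variable {V W : Type*} [Fintype V] [Fintype W] [DecidableEq V]
variable (G : SimpleGraph V) [DecidableRel G.Adj] (H : SimpleGraph W)

lemma ec_adj_inl_inl {u v : V} :
    (edgeCorona G H).Adj (Sum.inl u) (Sum.inl v) ↔ G.Adj u v := Iff.rfl

lemma ec_adj_inr_inl {ew : G.edgeSet × W} {v : V} :
    (edgeCorona G H).Adj (Sum.inr ew) (Sum.inl v) ↔ v ∈ (ew.1 : Sym2 V) := Iff.rfl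

/-- The graph homomorphism from `G - x₀` into `(G ◇ H) - inl x₀`. -/
def inlHom (x₀ : V) :
    (G.induce (↑({x₀} : Finset V) : Set V)ᶜ) →g
      ((edgeCorona G H).induce
        (↑({Sum.inl x₀} : Finset (V ⊕ (G.edgeSet × W))) : Set (V ⊕ (G.edgeSet × W)))ᶜ) where
  toFun z := ⟨Sum.inl z.1, by
    have h2 := z.2
    simp only [Finset.coe_singleton, Set.mem_compl_singleton_iff] at h2 ⊢
    simpa using h2⟩
  map_rel' := fun h => h

/-- The graph homomorphism from `G` into `G ◇ H`. -/
def inlHom' : G →g edgeCorona G H := ⟨Sum.inl, fun h => h⟩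

lemma corona_preconnected (hG : G.Connected) : (edgeCorona G H).Preconnected := by
  have hne := hG.nonempty
  have key : ∀ z : V ⊕ (G.edgeSet × W), ∃ u : V, (edgeCorona G H).Reachable z (Sum.inl u) := by
    rintro (u | ⟨e, w⟩)
    · exact ⟨u, SimpleGraph.Reachable.refl _⟩
    · obtain ⟨u, hu, -⟩ := exists_end G (Classical.arbitrary V) e
      exact ⟨u, SimpleGraph.Adj.reachable (by exact hu)⟩
  intro a b
  obtain ⟨ua, ha⟩ := key a
  obtain ⟨ub, hb⟩ := key b
  exact ha.trans (((hG.preconnected ua ub).map (inlHom' G H)).trans hb.symm)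

lemma induce_empty_compl_preconnected {α : Type*} (Γ : SimpleGraph α) (hΓ : Γ.Preconnected) :
    (Γ.induce (↑(∅ : Finset α) : Set α)ᶜ).Preconnected := by
  intro a b
  have := (hΓ a.1 b.1).map
    (⟨fun v => ⟨v, by simp⟩, fun h => h⟩ : Γ →g Γ.induce (↑(∅ : Finset α) : Set α)ᶜ)
  exact this

lemma corona_del_inr_preconnected (hG : G.Connected) (e₀ : G.edgeSet) (w₀ : W) :
    ((edgeCorona G H).induce
      (↑({Sum.inr (e₀, w₀)} : Finset (V ⊕ (G.edgeSet × W))) : Set (V ⊕ (G.edgeSet × W)))ᶜ).Preconnected := by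
  have hne := hG.nonempty
  set S : Set (V ⊕ (G.edgeSet × W)) := (↑({Sum.inr (e₀, w₀)} : Finset (V ⊕ (G.edgeSet × W))) : Set _)ᶜ with hS
  have hinl : ∀ u : V, Sum.inl u ∈ S := by intro u; simp [hS]
  have key : ∀ z : ↥S, ∃ u : V,
      ((edgeCorona G H).induce S).Reachable z ⟨Sum.inl u, hinl u⟩ := by
    rintro ⟨(u | ⟨e, w⟩), hz⟩
    · exact ⟨u, SimpleGraph.Reachable.refl _⟩
    · obtain ⟨u, hu, -⟩ := exists_end G (Classical.arbitrary V) e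
      exact ⟨u, SimpleGraph.Adj.reachable (by exact hu)⟩
  intro a b
  obtain ⟨ua, ha⟩ := key a
  obtain ⟨ub, hb⟩ := key b
  refine ha.trans (SimpleGraph.Reachable.trans ?_ hb.symm)
  exact (hG.preconnected ua ub).map
    (⟨fun v => ⟨Sum.inl v, hinl v⟩, fun h => h⟩ : G →g (edgeCorona G H).induce S)

lemma corona_del_inl_preconnected (hG : G.Connected) (x₀ : V)
    (h : (G.induce (↑({x₀} : Finset V) : Set V)ᶜ).Preconnected) :
    ((edgeCorona G H).induce
      (↑({Sum.inl x₀} : Finset (V ⊕ (G.edgeSet × W))) : Set (V ⊕ (G.edgeSet × W)))ᶜ).Preconnected := by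
  set S : Set (V ⊕ (G.edgeSet × W)) :=
    (↑({Sum.inl x₀} : Finset (V ⊕ (G.edgeSet × W))) : Set _)ᶜ with hS
  have hinl : ∀ u : V, u ≠ x₀ → Sum.inl u ∈ S := by intro u hu; simp [hS, hu]
  have key : ∀ z : ↥S, ∃ (u : V) (hu : u ≠ x₀),
      ((edgeCorona G H).induce S).Reachable z ⟨Sum.inl u, hinl u hu⟩ := by
    rintro ⟨(u | ⟨e, w⟩), hz⟩
    · have hu : u ≠ x₀ := by
        intro h'; apply hz; simp [hS, h']
      exact ⟨u, hu, SimpleGraph.Reachable.refl _⟩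
    · obtain ⟨u, hu, hune⟩ := exists_end G x₀ e
      exact ⟨u, hune, SimpleGraph.Adj.reachable (by exact hu)⟩
  intro a b
  obtain ⟨ua, hua, ha⟩ := key a
  obtain ⟨ub, hub, hb⟩ := key b
  refine ha.trans (SimpleGraph.Reachable.trans ?_ hb.symm)
  have hr := h ⟨ua, by simp [hua]⟩ ⟨ub, by simp [hub]⟩
  exact hr.map (inlHom G H x₀)

end Aux2

section Aux3

variable {V W : Type*} [Fintype V] [Fintype W] [DecidableEq V]
variable (G : SimpleGraph V) [DecidableRel G.Adj] (H : SimpleGraph W)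

/-- Projection of corona vertices to `V`, avoiding `x₀`. -/
noncomputable def projF (x₀ : V) : (V ⊕ (G.edgeSet × W)) → V
  | .inl v => v
  | .inr ew => pickEnd G x₀ ew.1

lemma projF_mem (x₀ : V) {b : V ⊕ (G.edgeSet × W)}
    (hb : b ∈ (↑({Sum.inl x₀} : Finset (V ⊕ (G.edgeSet × W))) : Set (V ⊕ (G.edgeSet × W)))ᶜ) :
    projF G x₀ b ∈ (↑({x₀} : Finset V) : Set V)ᶜ := by
  rcases b with v | ew
  · simp only [Finset.coe_singleton, Set.mem_compl_singleton_iff] at hb ⊢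
    simpa [projF] using hb
  · simp only [Finset.coe_singleton, Set.mem_compl_singleton_iff]
    exact pickEnd_ne G x₀ ew.1

lemma proj_step (x₀ : V) {a c : V ⊕ (G.edgeSet × W)}
    (ha : a ∈ (↑({Sum.inl x₀} : Finset (V ⊕ (G.edgeSet × W))) : Set (V ⊕ (G.edgeSet × W)))ᶜ)
    (hc : c ∈ (↑({Sum.inl x₀} : Finset (V ⊕ (G.edgeSet × W))) : Set (V ⊕ (G.edgeSet × W)))ᶜ)
    (h : (edgeCorona G H).Adj a c) :
    (G.induce (↑({x₀} : Finset V) : Set V)ᶜ).Reachable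
      ⟨projF G x₀ a, projF_mem G x₀ ha⟩ ⟨projF G x₀ c, projF_mem G x₀ hc⟩ := by
  rcases a with u | ⟨e, w⟩ <;> rcases c with v | ⟨e', w'⟩
  · exact SimpleGraph.Adj.reachable (by exact h)
  · have hu : u ∈ ((e', w').1 : Sym2 V) := h
    by_cases hue : u = pickEnd G x₀ e'
    · have hEq : (⟨projF G x₀ (Sum.inl u), projF_mem G x₀ ha⟩ :
          ↥(↑({x₀} : Finset V) : Set V)ᶜ) =
          ⟨projF G x₀ (Sum.inr (e', w')), projF_mem G x₀ hc⟩ := Subtype.ext (by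
        simpa [projF] using hue)
      rw [hEq]
    · exact SimpleGraph.Adj.reachable
        (by exact adj_of_mem_of_mem G e'.2 hu (pickEnd_mem G x₀ e') hue)
  · have hv : v ∈ ((e, w).1 : Sym2 V) := h
    by_cases hue : v = pickEnd G x₀ e
    · have hEq : (⟨projF G x₀ (Sum.inr (e, w)), projF_mem G x₀ ha⟩ :
          ↥(↑({x₀} : Finset V) : Set V)ᶜ) =
          ⟨projF G x₀ (Sum.inl v), projF_mem G x₀ hc⟩ := Subtype.ext (by
        simpa [projF] using hue.symm)
      rw [hEq]
    · exact SimpleGraph.Adj.reachable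
        (by exact (adj_of_mem_of_mem G e.2 hv (pickEnd_mem G x₀ e) hue).symm)
  · have he : e = e' := h.1
    subst he
    have hEq : (⟨projF G x₀ (Sum.inr (e, w)), projF_mem G x₀ ha⟩ :
        ↥(↑({x₀} : Finset V) : Set V)ᶜ) =
        ⟨projF G x₀ (Sum.inr (e, w')), projF_mem G x₀ hc⟩ := Subtype.ext rfl
    rw [hEq]

lemma proj_reach (x₀ : V)
    {a b : ↥(↑({Sum.inl x₀} : Finset (V ⊕ (G.edgeSet × W))) : Set (V ⊕ (G.edgeSet × W)))ᶜ}
    (h : ((edgeCorona G H).induce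
      (↑({Sum.inl x₀} : Finset (V ⊕ (G.edgeSet × W))) : Set (V ⊕ (G.edgeSet × W)))ᶜ).Reachable a b) :
    (G.induce (↑({x₀} : Finset V) : Set V)ᶜ).Reachable
      ⟨projF G x₀ a.1, projF_mem G x₀ a.2⟩ ⟨projF G x₀ b.1, projF_mem G x₀ b.2⟩ := by
  obtain ⟨p⟩ := h
  induction p with
  | nil => exact SimpleGraph.Reachable.refl _
  | @cons a' c' b' h q ih => exact (proj_step G H x₀ a'.2 c'.2 h).trans ih

lemma corona_del_inl_preconnected_rev (x₀ : V)
    (h : ((edgeCorona G H).induce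
      (↑({Sum.inl x₀} : Finset (V ⊕ (G.edgeSet × W))) : Set (V ⊕ (G.edgeSet × W)))ᶜ).Preconnected) :
    (G.induce (↑({x₀} : Finset V) : Set V)ᶜ).Preconnected := by
  intro u v
  have hu : Sum.inl u.1 ∈ (↑({Sum.inl x₀} : Finset (V ⊕ (G.edgeSet × W))) : Set (V ⊕ (G.edgeSet × W)))ᶜ := by
    have h2 := u.2
    simp only [Finset.coe_singleton, Set.mem_compl_singleton_iff] at h2 ⊢
    simpa using h2
  have hv : Sum.inl v.1 ∈ (↑({Sum.inl x₀} : Finset (V ⊕ (G.edgeSet × W))) : Set (V ⊕ (G.edgeSet × W)))ᶜ := by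
    have h2 := v.2
    simp only [Finset.coe_singleton, Set.mem_compl_singleton_iff] at h2 ⊢
    simpa using h2
  have hr := proj_reach G H x₀ (h ⟨Sum.inl u.1, hu⟩ ⟨Sum.inl v.1, hv⟩)
  exact hr

end Aux3

section Aux4

variable {V W : Type*} [Fintype V] [Fintype W] [DecidableEq V]
variable (G : SimpleGraph V) [DecidableRel G.Adj] (H : SimpleGraph W)

lemma edges_touching_card (hG : G.Connected) (x₀ : V) (CC : Set V)
    (hne : CC.Nonempty) (hx : x₀ ∉ CC) {k : ℕ} (hcard : k + 1 ≤ CC.ncard) :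
    k + G.minDegree ≤ {e : G.edgeSet | ∃ v ∈ CC, v ∈ (e : Sym2 V)}.ncard := by
  classical
  set ECs := {e : G.edgeSet | ∃ v ∈ CC, v ∈ (e : Sym2 V)} with hECs
  have hpar : ∀ z : ↥CC, ∃ p, G.Adj z.1 p ∧ G.dist p x₀ < G.dist z.1 x₀ := fun z =>
    exists_parent G hG.preconnected (fun h => hx (h ▸ z.2))
  choose par hadj hdist using hpar
  set F : ↥CC → G.edgeSet := fun z => ⟨s(z.1, par z), hadj z⟩ with hF
  have hFinj : Function.Injective F := by
    intro z z' hzz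
    have h2 : s(z.1, par z) = s(z'.1, par z') := congrArg Subtype.val hzz
    rw [Sym2.eq_iff] at h2
    rcases h2 with ⟨h3, h4⟩ | ⟨h3, h4⟩
    · exact Subtype.ext h3
    · exfalso
      have d1 := hdist z
      have d2 := hdist z'
      rw [h4] at d1
      rw [← h3] at d2
      omega
  obtain ⟨y, hyCC, hymax⟩ := Set.exists_max_image CC (fun v => G.dist v x₀) (Set.toFinite CC) hne
  set yz : ↥CC := (⟨y, hyCC⟩ : ↥CC) with hyz
  set E1 := Set.range F with hE1def
  set E2 := {e : G.edgeSet | y ∈ (e : Sym2 V)} \ {F yz} with hE2def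
  have hE1 : E1 ⊆ ECs := by
    rintro e ⟨z, rfl⟩
    exact ⟨z.1, z.2, by simp [hF]⟩
  have hE2 : E2 ⊆ ECs := fun e he => ⟨y, hyCC, he.1⟩
  have hdisj : Disjoint E1 E2 := by
    rw [Set.disjoint_left]
    rintro e ⟨z, rfl⟩ ⟨hy, hne2⟩
    have hy' : y = z.1 ∨ y = par z := by simpa [hF, Sym2.mem_iff] using hy
    rcases hy' with h | h
    · exact hne2 (by
        simp only [Set.mem_singleton_iff]
        exact congrArg F (Subtype.ext h.symm))
    · have d1 := hdist z
      have d2 : G.dist z.1 x₀ ≤ G.dist y x₀ := hymax z.1 z.2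
      rw [h] at d2
      omega
  have hUsub : E1 ∪ E2 ⊆ ECs := Set.union_subset hE1 hE2
  have hUcard : (E1 ∪ E2).ncard ≤ ECs.ncard := Set.ncard_le_ncard hUsub (Set.toFinite _)
  have hUeq : (E1 ∪ E2).ncard = E1.ncard + E2.ncard :=
    Set.ncard_union_eq hdisj (Set.toFinite _) (Set.toFinite _)
  have hE1card : E1.ncard = CC.ncard := by
    rw [← Nat.card_coe_set_eq, ← Nat.card_coe_set_eq]
    exact Nat.card_range_of_injective hFinj
  have hmemFy : F yz ∈ {e : G.edgeSet | y ∈ (e : Sym2 V)} := by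
    simp [hF]
    exact Or.inl rfl
  have hE2card : E2.ncard = {e : G.edgeSet | y ∈ (e : Sym2 V)}.ncard - 1 :=
    Set.ncard_diff_singleton_of_mem hmemFy
  have hEycard : {e : G.edgeSet | y ∈ (e : Sym2 V)}.ncard = G.degree y := by
    rw [← Nat.card_coe_set_eq, ← card_incident G y]
    exact Nat.card_congr (Equiv.setCongr rfl)
  have hdeg : G.minDegree ≤ G.degree y := G.minDegree_le_degree y
  omega

lemma component_card_lower (hG : G.Connected) (x₀ : V) {k : ℕ}
    (hA : CutBound G ({x₀} : Finset V) k)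
    (c : ((edgeCorona G H).induce
      (↑({Sum.inl x₀} : Finset (V ⊕ (G.edgeSet × W))) : Set (V ⊕ (G.edgeSet × W)))ᶜ).ConnectedComponent) :
    (k + 1) + (k + G.minDegree) * Fintype.card W ≤
      Nat.card {v : ↥(↑({Sum.inl x₀} : Finset (V ⊕ (G.edgeSet × W))) : Set (V ⊕ (G.edgeSet × W)))ᶜ //
        ((edgeCorona G H).induce
          (↑({Sum.inl x₀} : Finset (V ⊕ (G.edgeSet × W))) : Set (V ⊕ (G.edgeSet × W)))ᶜ).connectedComponentMk v = c} := by
  classical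
  obtain ⟨b, hb⟩ : ∃ b, ((edgeCorona G H).induce
      (↑({Sum.inl x₀} : Finset (V ⊕ (G.edgeSet × W))) : Set (V ⊕ (G.edgeSet × W)))ᶜ).connectedComponentMk b = c :=
    SimpleGraph.ConnectedComponent.ind (fun b => ⟨b, rfl⟩) c
  subst hb
  let S : Set (V ⊕ (G.edgeSet × W)) :=
    (↑({Sum.inl x₀} : Finset (V ⊕ (G.edgeSet × W))) : Set (V ⊕ (G.edgeSet × W)))ᶜ
  have hSdef : S = (↑({Sum.inl x₀} : Finset (V ⊕ (G.edgeSet × W))) : Set (V ⊕ (G.edgeSet × W)))ᶜ := rfl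
  let SV : Set V := (↑({x₀} : Finset V) : Set V)ᶜ
  have hSV : SV = (↑({x₀} : Finset V) : Set V)ᶜ := rfl
  let KC : SimpleGraph ↥S := (edgeCorona G H).induce S
  let GA : SimpleGraph ↥SV := G.induce SV
  let c : KC.ConnectedComponent := KC.connectedComponentMk b
  have hc : c = KC.connectedComponentMk b := rfl
  have hbeq : ∀ z : ↥S, z.1 = b.1 → KC.connectedComponentMk z = c := by
    intro z hz
    have hzb : z = b := Subtype.ext hz
    rw [hzb, hc]
  obtain ⟨y₀, hy₀S, hy₀c⟩ : ∃ (y₀ : V) (h : Sum.inl y₀ ∈ S),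
      KC.connectedComponentMk ⟨Sum.inl y₀, h⟩ = c := by
    rcases hbv : b.1 with u | ⟨e, w⟩
    · exact ⟨u, hbv ▸ b.2, hbeq _ hbv.symm⟩
    · have hbS' : Sum.inr (e, w) ∈ S := hbv ▸ b.2
      refine ⟨pickEnd G x₀ e, by simp [hSdef, pickEnd_ne G x₀ e], ?_⟩
      have hadj : KC.Adj ⟨Sum.inr (e, w), hbS'⟩
          ⟨Sum.inl (pickEnd G x₀ e), by simp [hSdef, pickEnd_ne G x₀ e]⟩ :=
        pickEnd_mem G x₀ e
      exact (SimpleGraph.ConnectedComponent.sound hadj.symm.reachable).trans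
        (hbeq _ hbv.symm)
  have hy₀x : y₀ ≠ x₀ := by
    intro h'; apply hy₀S; simp [hSdef, h']
  have hy₀SV : y₀ ∈ SV := by simp [hSV, hy₀x]
  let C : GA.ConnectedComponent := GA.connectedComponentMk ⟨y₀, hy₀SV⟩
  let CC : Set V := {v | ∃ h : v ∈ SV, GA.connectedComponentMk ⟨v, h⟩ = C}
  have hCC : CC = {v | ∃ h : v ∈ SV, GA.connectedComponentMk ⟨v, h⟩ = C} := rfl
  have hy₀CC : y₀ ∈ CC := ⟨hy₀SV, rfl⟩
  have hxCC : x₀ ∉ CC := by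
    rintro ⟨h, -⟩; simp [hSV] at h
  have hCCcard : k + 1 ≤ CC.ncard := by
    refine le_trans (hA C) ?_
    have h2 : Nat.card {z : ↥SV // GA.connectedComponentMk z = C} ≤ Nat.card ↥CC := by
      apply Nat.card_le_card_of_injective
        (fun z : {z : ↥SV // GA.connectedComponentMk z = C} =>
          (⟨z.1.1, z.1.2, z.2⟩ : ↥CC))
      intro z z' hzz
      have h5 : ((z : ↥SV) : V) = ((z' : ↥SV) : V) :=
        congrArg (fun t : ↥CC => (t : V)) hzz
      exact Subtype.ext (Subtype.ext h5)
    rw [Nat.card_coe_set_eq] at h2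
    exact h2
  have hCCcomp : ∀ v, v ∈ CC → ∃ h : Sum.inl v ∈ S,
      KC.connectedComponentMk ⟨Sum.inl v, h⟩ = c := by
    intro v hv
    obtain ⟨hvSV, hvC⟩ := hv
    have hreach : GA.Reachable ⟨v, hvSV⟩ ⟨y₀, hy₀SV⟩ :=
      SimpleGraph.ConnectedComponent.exact hvC
    have hvx : v ≠ x₀ := by
      intro h'; rw [h'] at hvSV; simp [hSV] at hvSV
    refine ⟨by simp [hSdef, hvx], ?_⟩
    have hr2 := hreach.map (inlHom G H x₀)
    exact (SimpleGraph.ConnectedComponent.sound hr2).trans hy₀c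
  let ECs : Set G.edgeSet := {e : G.edgeSet | ∃ v ∈ CC, v ∈ (e : Sym2 V)}
  have hECcard : k + G.minDegree ≤ ECs.ncard :=
    edges_touching_card G hG x₀ CC ⟨y₀, hy₀CC⟩ hxCC hCCcard
  have hInr : ∀ (e : ↥ECs) (w : W), ∃ h : Sum.inr ((e : G.edgeSet), w) ∈ S,
      KC.connectedComponentMk ⟨Sum.inr ((e : G.edgeSet), w), h⟩ = c := by
    intro e w
    obtain ⟨v, hvCC, hv⟩ := e.2
    obtain ⟨hmem, hcomp⟩ := hCCcomp v hvCC
    refine ⟨by simp [hSdef], ?_⟩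
    have hadj : KC.Adj ⟨Sum.inr ((e : G.edgeSet), w), by simp [hSdef]⟩ ⟨Sum.inl v, hmem⟩ := hv
    exact (SimpleGraph.ConnectedComponent.sound hadj.reachable).trans hcomp
  have hTfin : Finite {v : ↥S // KC.connectedComponentMk v = c} := Subtype.finite
  let T : Type _ := {v : ↥S // KC.connectedComponentMk v = c}
  let Φ : (↥CC ⊕ (↥ECs × W)) → T := Sum.elim
    (fun z => ⟨⟨Sum.inl z.1, (hCCcomp z.1 z.2).choose⟩, (hCCcomp z.1 z.2).choose_spec⟩)
    (fun p => ⟨⟨Sum.inr ((p.1 : G.edgeSet), p.2), (hInr p.1 p.2).choose⟩,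
      (hInr p.1 p.2).choose_spec⟩)
  have hΦ : Φ = Sum.elim
    (fun z => ⟨⟨Sum.inl z.1, (hCCcomp z.1 z.2).choose⟩, (hCCcomp z.1 z.2).choose_spec⟩)
    (fun p => ⟨⟨Sum.inr ((p.1 : G.edgeSet), p.2), (hInr p.1 p.2).choose⟩,
      (hInr p.1 p.2).choose_spec⟩) := rfl
  have hΦinj : Function.Injective Φ := by
    intro a b hab
    have h' : (Φ a).1.1 = (Φ b).1.1 := by rw [hab]
    rcases a with z | p <;> rcases b with z' | p'
    · simp only [hΦ, Sum.elim_inl] at h'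
      exact congrArg Sum.inl (Subtype.ext (Sum.inl.inj h'))
    · exact absurd h' (by simp [hΦ])
    · exact absurd h' (by simp [hΦ])
    · simp only [hΦ, Sum.elim_inr] at h'
      have h2 := Sum.inr.inj h'
      have h3 : (p.1 : G.edgeSet) = (p'.1 : G.edgeSet) :=
        congrArg (Prod.fst : G.edgeSet × W → G.edgeSet) h2
      have h4 : p.2 = p'.2 := congrArg (Prod.snd : G.edgeSet × W → W) h2
      refine congrArg Sum.inr ?_
      exact Prod.ext (Subtype.ext h3) h4
  have hcard2 : Nat.card (↥CC ⊕ (↥ECs × W)) ≤ Nat.card T :=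
    Nat.card_le_card_of_injective Φ hΦinj
  rw [Nat.card_sum, Nat.card_prod, Nat.card_coe_set_eq, Nat.card_coe_set_eq,
    Nat.card_eq_fintype_card] at hcard2
  have hfin : (k + 1) + (k + G.minDegree) * Fintype.card W ≤
      CC.ncard + ECs.ncard * Fintype.card W := by
    have := Nat.mul_le_mul_right (Fintype.card W) hECcard
    omega
  exact le_trans hfin hcard2

end Aux4

theorem edgeCorona_kappaG_eq_one_iff {V W : Type*} [Fintype V] [Fintype W] [DecidableEq V]
    (G : SimpleGraph V) [DecidableRel G.Adj] (H : SimpleGraph W)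
    (hGconn : G.Connected) (hGnc : G ≠ ⊤) (hV : 3 ≤ Fintype.card V)
    (hHconn : H.Connected) (m : ℕ) (hm : Fintype.card W = m) (k : ℕ)
    (hk : ∃ A : Finset V, IsMinVertexCut G A ∧ CutBound G A k)
    (hkmax : ∀ j : ℕ, (∃ A : Finset V, IsMinVertexCut G A ∧ CutBound G A j) → j ≤ k)
    (g : ℕ) (hg : g + 1 ≤ (k + 1) + k * m + G.minDegree * m) :
    kappaG (edgeCorona G H) g = 1 ↔ kappa G = 1 := by
  classical
  have hNV : Nonempty V := hGconn.nonempty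
  have hKpre : (edgeCorona G H).Preconnected := corona_preconnected G H hGconn
  have hKempty : ((edgeCorona G H).induce
      (↑(∅ : Finset (V ⊕ (G.edgeSet × W))) : Set (V ⊕ (G.edgeSet × W)))ᶜ).Preconnected :=
    induce_empty_compl_preconnected _ hKpre
  have hGempty : (G.induce (↑(∅ : Finset V) : Set V)ᶜ).Preconnected :=
    induce_empty_compl_preconnected _ hGconn.preconnected
  constructor
  · intro h1
    have hmem : (1 : ℕ∞) ∈ {n : ℕ∞ | ∃ S : Finset (V ⊕ (G.edgeSet × W)),
        IsRgVertexCut (edgeCorona G H) g ↑S ∧ (S.card : ℕ∞) = n} := by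
      by_contra hno
      have h2 : (2 : ℕ∞) ≤ kappaG (edgeCorona G H) g := by
        unfold kappaG
        apply le_sInf
        rintro b ⟨S, hS, rfl⟩
        by_cases h0 : S.card = 0
        · exfalso
          rw [Finset.card_eq_zero] at h0
          subst h0
          exact hS.1 hKempty
        · by_cases hc1 : S.card = 1
          · exact absurd ⟨S, hS, by exact_mod_cast hc1⟩ hno
          · have h2' : 2 ≤ S.card := by omega
            exact_mod_cast h2'
      rw [h1] at h2
      norm_num at h2
    obtain ⟨S, hS, hScard⟩ := hmem
    have hc1 : S.card = 1 := by exact_mod_cast hScard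
    obtain ⟨z, rfl⟩ := Finset.card_eq_one.mp hc1
    rcases z with x₀ | ⟨e₀, w₀⟩
    · have hncut : ¬ (G.induce (↑({x₀} : Finset V) : Set V)ᶜ).Preconnected := by
        intro hpre
        exact hS.1 (corona_del_inl_preconnected G H hGconn x₀ hpre)
      have hmemK : 1 ∈ {n : ℕ | ∃ S : Finset V, IsVertexCut G ↑S ∧ S.card = n} :=
        ⟨{x₀}, hncut, Finset.card_singleton x₀⟩
      have hle : kappa G ≤ 1 := Nat.sInf_le hmemK
      have h0 : kappa G ≠ 0 := by
        intro h0
        unfold kappa at h0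
        rw [Nat.sInf_eq_zero] at h0
        rcases h0 with h0 | h0
        · obtain ⟨S0, hS0, hS0c⟩ := h0
          rw [Finset.card_eq_zero] at hS0c
          subst hS0c
          exact hS0 hGempty
        · rw [Set.eq_empty_iff_forall_notMem] at h0
          exact h0 1 hmemK
      omega
    · exfalso
      exact hS.1 (corona_del_inr_preconnected G H hGconn e₀ w₀)
  · intro h1
    obtain ⟨A, ⟨hAcut, hAcard⟩, hAbound⟩ := hk
    rw [h1] at hAcard
    obtain ⟨x₀, rfl⟩ := Finset.card_eq_one.mp hAcard
    have hnotpre : ¬ ((edgeCorona G H).induce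
        (↑({Sum.inl x₀} : Finset (V ⊕ (G.edgeSet × W))) : Set (V ⊕ (G.edgeSet × W)))ᶜ).Preconnected := by
      intro hpre
      exact hAcut (corona_del_inl_preconnected_rev G H x₀ hpre)
    have hcut : IsRgVertexCut (edgeCorona G H) g
        ↑({Sum.inl x₀} : Finset (V ⊕ (G.edgeSet × W))) := by
      refine ⟨hnotpre, ?_⟩
      intro c
      have hb := component_card_lower G H hGconn x₀ hAbound c
      have harith : g + 1 ≤ (k + 1) + (k + G.minDegree) * Fintype.card W := by
        rw [hm, Nat.add_mul]
        omega
      exact le_trans harith hb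
    unfold kappaG
    apply le_antisymm
    · exact sInf_le ⟨{Sum.inl x₀}, hcut, by simp⟩
    · apply le_sInf
      rintro b ⟨S, hS, rfl⟩
      have hne0 : S.card ≠ 0 := by
        intro h0
        rw [Finset.card_eq_zero] at h0
        subst h0
        exact hS.1 hKempty
      exact_mod_cast Nat.one_le_iff_ne_zero.mpr hne0


end ExtraConn
end

section
/- Let G and H be connected graphs with H nontrivial, and let F be any subset of the edges of the copy of G inside the edge corona G ◇ H. Then the graph obtained from G ◇ H by deleting the edges in F is connected. -/
open SimpleGraph

namespace ExtraConn

variable {V W : Type*}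

theorem edgeCorona_deleteEdges_connected {V W : Type*}
    (G : SimpleGraph V) (H : SimpleGraph W) [Nontrivial W]
    (hGconn : G.Connected) (hHconn : H.Connected)
    (F : Set (Sym2 (V ⊕ (G.edgeSet × W))))
    (hF : ∀ e ∈ F, ∃ u v : V, G.Adj u v ∧ e = s(Sum.inl u, Sum.inl v)) :
    ((edgeCorona G H).deleteEdges F).Connected := by
  set G' := (edgeCorona G H).deleteEdges F with hG'
  have hW : Nonempty W := inferInstance
  obtain ⟨w0⟩ := hW
  -- mixed edges are never in F
  have hmix : ∀ (u : V) (ew : G.edgeSet × W),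
      s(Sum.inl u, Sum.inr ew) ∉ F := by
    intro u ew h
    obtain ⟨a, b, -, heq⟩ := hF _ h
    rw [Sym2.eq_iff] at heq
    rcases heq with ⟨h1, h2⟩ | ⟨h1, h2⟩ <;> simp at h1 h2
  have hadjmix : ∀ (u : V) (ew : G.edgeSet × W), u ∈ (ew.1 : Sym2 V) →
      G'.Adj (Sum.inl u) (Sum.inr ew) := by
    intro u ew hu
    rw [hG', SimpleGraph.deleteEdges_adj]
    exact ⟨hu, hmix u ew⟩
  -- adjacent vertices of G are reachable in G'
  have hstep : ∀ u v : V, G.Adj u v →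
      G'.Reachable (Sum.inl u : V ⊕ (G.edgeSet × W)) (Sum.inl v) := by
    intro u v huv
    set e : G.edgeSet := ⟨s(u, v), huv⟩ with he
    have h1 : G'.Adj (Sum.inl u) (Sum.inr (e, w0)) := by
      refine hadjmix u (e, w0) ?_
      simp [he]
    have h2 : G'.Adj (Sum.inl v) (Sum.inr (e, w0)) := by
      refine hadjmix v (e, w0) ?_
      simp [he]
    exact h1.reachable.trans h2.reachable.symm
  have hVstep : ∀ u v : V, G.Reachable u v →
      G'.Reachable (Sum.inl u : V ⊕ (G.edgeSet × W)) (Sum.inl v) := by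
    intro u v h
    obtain ⟨p⟩ := h
    induction p with
    | nil => exact Reachable.refl _
    | cons h _ ih => exact (hstep _ _ h).trans ih
  -- every vertex reaches some inl vertex
  have hbase : ∀ a : V ⊕ (G.edgeSet × W), ∃ u : V, G'.Reachable a (Sum.inl u) := by
    rintro (u | ⟨e, w⟩)
    · exact ⟨u, Reachable.refl _⟩
    · induction e using Subtype.rec with
      | _ s hs =>
        induction s using Sym2.inductionOn with
        | _ x y =>
          refine ⟨x, ((hadjmix x (⟨s(x, y), hs⟩, w) ?_).reachable).symm⟩
          simp
  rw [connected_iff]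
  refine ⟨?_, ?_⟩
  · intro a b
    obtain ⟨u, hu⟩ := hbase a
    obtain ⟨v, hv⟩ := hbase b
    exact hu.trans ((hVstep u v (hGconn.preconnected u v)).trans hv.symm)
  · obtain ⟨v⟩ := hGconn.nonempty
    exact ⟨Sum.inl v⟩

end ExtraConn
end

section
/- Let G be a connected non-complete graph with n vertices and H a connected graph with m vertices, and let g be an integer with 1 ≤ g ≤ m − 1. Then: κ_g(G ⊟ H) = 1 if and only if κ(G) = 1; if κ(G) = 2 and G has a minimum vertex cut consisting of two non-adjacent vertices, then κ_g(G ⊟ H) = 2; if κ(G) = 2 and every minimum vertex cut of G consists of two adjacent vertices, then κ_g(G ⊟ H) = 3; and if κ(G) ≥ 3, then κ_g(G ⊟ H) = 3. -/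
open SimpleGraph

namespace ExtraConn

variable {V W : Type*}

/-! ### Auxiliary lemmas -/

section Aux

private lemma three_pigeon {α : Type*} {a b c x y : α} (hab : a ≠ b) (hac : a ≠ c)
    (hbc : b ≠ c) (ha : a = x ∨ a = y) (hb : b = x ∨ b = y) (hc : c = x ∨ c = y) : False := by
  rcases ha with rfl | rfl <;> rcases hb with rfl | rfl <;> rcases hc with rfl | rfl <;>
    simp_all

private lemma exists_not_adj {G : SimpleGraph V} (h : G ≠ ⊤) :
    ∃ a b : V, a ≠ b ∧ ¬ G.Adj a b := by
  by_contra hc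
  push_neg at hc
  apply h
  ext a b
  simp only [top_adj]
  exact ⟨fun h' => h'.ne, fun hne => hc a b hne⟩

private lemma exists_adj_of_ne_top {G : SimpleGraph V} (hc : G.Connected) (hnt : G ≠ ⊤)
    (u : V) : ∃ v, G.Adj u v := by
  obtain ⟨a, b, hab, -⟩ := exists_not_adj hnt
  have : ∃ c : V, c ≠ u := by
    rcases eq_or_ne a u with rfl | h
    · exact ⟨b, fun hb => hab hb.symm⟩
    · exact ⟨a, h⟩
  obtain ⟨c, hcu⟩ := this
  obtain ⟨w⟩ := hc.preconnected u c
  cases w with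
  | nil => exact absurd rfl hcu
  | cons h p => exact ⟨_, h⟩

private lemma exists_ne_pair {G : SimpleGraph V} (hc : G.Connected) (hnt : G ≠ ⊤)
    (u v : V) : ∃ b, b ≠ u ∧ b ≠ v := by
  obtain ⟨a, b, hab, hnadj⟩ := exists_not_adj hnt
  obtain ⟨w⟩ := hc.preconnected a b
  cases w with
  | nil => exact absurd rfl hab
  | @cons _ z _ h p =>
    have hza : a ≠ z := h.ne
    have hzb : z ≠ b := fun e => hnadj (e ▸ h)
    by_contra hno
    push_neg at hno
    have h1 : a = u ∨ a = v := by
      rcases eq_or_ne a u with rfl | h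
      · exact Or.inl rfl
      · exact Or.inr (hno a h)
    have h2 : z = u ∨ z = v := by
      rcases eq_or_ne z u with rfl | h
      · exact Or.inl rfl
      · exact Or.inr (hno z h)
    have h3 : b = u ∨ b = v := by
      rcases eq_or_ne b u with rfl | h
      · exact Or.inl rfl
      · exact Or.inr (hno b h)
    exact three_pigeon hza hab hzb h1 h2 h3

private lemma adj_of_mem_mem {G : SimpleGraph V} (e : G.edgeSet) {u v : V}
    (hu : u ∈ (e : Sym2 V)) (hv : v ∈ (e : Sym2 V)) (hne : u ≠ v) : G.Adj u v := by
  obtain ⟨e, he⟩ := e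
  induction e with
  | _ a b =>
    rw [Sym2.mem_iff] at hu hv
    rw [SimpleGraph.mem_edgeSet] at he
    rcases hu with rfl | rfl <;> rcases hv with rfl | rfl
    · exact absurd rfl hne
    · exact he
    · exact he.symm
    · exact absurd rfl hne

private lemma edge_exists_mem_ne {G : SimpleGraph V} (e : G.edgeSet) (v : V) :
    ∃ u ∈ (e : Sym2 V), u ≠ v := by
  obtain ⟨e, he⟩ := e
  induction e with
  | _ a b =>
    rw [SimpleGraph.mem_edgeSet] at he
    rcases eq_or_ne a v with rfl | h
    · exact ⟨b, Sym2.mem_mk_right _ _, fun hb => he.ne (hb ▸ rfl)⟩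
    · exact ⟨a, Sym2.mem_mk_left _ _, h⟩

private lemma edge_avoid_pair {G : SimpleGraph V} (e : G.edgeSet) {u v : V}
    (hne : (e : Sym2 V) ≠ s(u, v)) : ∃ t ∈ (e : Sym2 V), t ≠ u ∧ t ≠ v := by
  obtain ⟨e, he⟩ := e
  induction e with
  | _ a b =>
    rw [SimpleGraph.mem_edgeSet] at he
    by_contra hno
    push_neg at hno
    have ha := hno a (Sym2.mem_mk_left _ _)
    have hb := hno b (Sym2.mem_mk_right _ _)
    have hab : a ≠ b := he.ne
    rcases eq_or_ne a u with rfl | hau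
    · have hbu : b ≠ a := hab.symm
      have : b = v := hb hbu
      exact hne (by subst this; rfl)
    · have hav : a = v := ha hau
      have hbu : b = u := by
        rcases eq_or_ne b u with h | h
        · exact h
        · exact absurd ((hb h).trans hav.symm) hab.symm
      subst hav; subst hbu
      exact hne Sym2.eq_swap

private lemma adj_of_pair_eq {G : SimpleGraph V} [DecidableEq V] {u v u' v' : V}
    (hAdj : G.Adj u' v') (hne : u ≠ v) (h : ({u, v} : Finset V) = {u', v'}) : G.Adj u v := by
  have hu : u ∈ ({u', v'} : Finset V) := h ▸ Finset.mem_insert_self u {v}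
  have hv : v ∈ ({u', v'} : Finset V) := h ▸ (by simp)
  simp only [Finset.mem_insert, Finset.mem_singleton] at hu hv
  rcases hu with rfl | rfl <;> rcases hv with rfl | rfl
  · exact absurd rfl hne
  · exact hAdj
  · exact hAdj.symm
  · exact absurd rfl hne

end Aux

section BigGraph

/-- Vertex type of the subdivision edge neighbourhood corona. -/
private abbrev BT (G : SimpleGraph V) (W : Type*) : Type _ :=
  (V ⊕ G.edgeSet) ⊕ (G.edgeSet × W)

/-- The `G`-vertices contained in a vertex set of the corona. -/
private def SVset (G : SimpleGraph V) {W : Type*} (S : Set (BT G W)) : Set V :=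
  {u | Sum.inl (Sum.inl u) ∈ S}

/-- The `G`-vertices "near" a vertex of the corona. -/
private def shadow (G : SimpleGraph V) {W : Type*} : BT G W → Set V
  | .inl (.inl u) => {u}
  | .inl (.inr e) => {x | x ∈ (e : Sym2 V)}
  | .inr ew => {x | x ∈ (ew.1 : Sym2 V)}

variable {G : SimpleGraph V} {H : SimpleGraph W}

private lemma reach_in_induced {s : Set V} (e : G.edgeSet) {u v : V}
    (hu : u ∈ (e : Sym2 V)) (hv : v ∈ (e : Sym2 V)) (hu' : u ∈ s) (hv' : v ∈ s) :
    (G.induce s).Reachable ⟨u, hu'⟩ ⟨v, hv'⟩ := by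
  rcases eq_or_ne u v with rfl | hne
  · exact Reachable.refl _
  · exact SimpleGraph.Adj.reachable (by exact adj_of_mem_mem e hu hv hne)

private lemma shadow_reach {S : Set (BT G W)} (x : BT G W) {u v : V}
    (hu : u ∈ shadow G x) (hv : v ∈ shadow G x)
    (hu' : u ∈ (SVset G S)ᶜ) (hv' : v ∈ (SVset G S)ᶜ) :
    (G.induce (SVset G S)ᶜ).Reachable ⟨u, hu'⟩ ⟨v, hv'⟩ := by
  match x with
  | .inl (.inl a) =>
    simp only [shadow, Set.mem_singleton_iff] at hu hv
    subst hu; subst hv; exact Reachable.refl _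
  | .inl (.inr e) => exact reach_in_induced e hu hv hu' hv'
  | .inr ew => exact reach_in_induced ew.1 hu hv hu' hv'

private lemma adj_shadow {S : Set (BT G W)} {x y : ↥Sᶜ}
    (hxy : ((subdivisionEdgeNC G H).induce Sᶜ).Adj x y) {u v : V}
    (hu : u ∈ shadow G x.1) (hv : v ∈ shadow G y.1)
    (hu' : u ∈ (SVset G S)ᶜ) (hv' : v ∈ (SVset G S)ᶜ) :
    (G.induce (SVset G S)ᶜ).Reachable ⟨u, hu'⟩ ⟨v, hv'⟩ := by
  have hadj : (subdivisionEdgeNC G H).Adj x.1 y.1 := hxy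
  obtain ⟨x, hx⟩ := x; obtain ⟨y, hy⟩ := y
  match x, y with
  | .inl (.inl a), .inl (.inl b) => exact False.elim hadj
  | .inl (.inl a), .inl (.inr f) =>
    have hmem : a ∈ (f : Sym2 V) := hadj
    simp only [shadow, Set.mem_singleton_iff] at hu
    subst hu
    exact reach_in_induced f hmem hv hu' hv'
  | .inl (.inl a), .inr fw =>
    have hmem : a ∈ (fw.1 : Sym2 V) := hadj
    simp only [shadow, Set.mem_singleton_iff] at hu
    subst hu
    exact reach_in_induced fw.1 hmem hv hu' hv'
  | .inl (.inr e), .inl (.inl b) =>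
    have hmem : b ∈ (e : Sym2 V) := hadj
    simp only [shadow, Set.mem_singleton_iff] at hv
    subst hv
    exact reach_in_induced e hu hmem hu' hv'
  | .inl (.inr e), .inl (.inr f) => exact False.elim hadj
  | .inl (.inr e), .inr fw => exact False.elim hadj
  | .inr ew, .inl (.inl b) =>
    have hmem : b ∈ (ew.1 : Sym2 V) := hadj
    simp only [shadow, Set.mem_singleton_iff] at hv
    subst hv
    exact reach_in_induced ew.1 hu hmem hu' hv'
  | .inr ew, .inl (.inr f) => exact False.elim hadj
  | .inr (e, w'), .inr (f, w'') =>
    have hef : e = f ∧ H.Adj w' w'' := hadj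
    obtain ⟨hef, -⟩ := hef
    subst hef
    exact reach_in_induced e hu hv hu' hv'

private lemma proj_reach_s13 {S : Set (BT G W)}
    (hS3 : ∀ z : ↥Sᶜ, ∃ u, u ∈ shadow G z.1 ∧ u ∈ (SVset G S)ᶜ)
    {x y : ↥Sᶜ} (w : ((subdivisionEdgeNC G H).induce Sᶜ).Walk x y) :
    ∀ (u : V), u ∈ shadow G x.1 → ∀ (hu' : u ∈ (SVset G S)ᶜ),
      ∀ (v : V), v ∈ shadow G y.1 → ∀ (hv' : v ∈ (SVset G S)ᶜ),
      (G.induce (SVset G S)ᶜ).Reachable ⟨u, hu'⟩ ⟨v, hv'⟩ := by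
  induction w with
  | nil => intro u hu hu' v hv hv'; exact shadow_reach _ hu hv hu' hv'
  | @cons a m b h p ih =>
    intro u hu hu' v hv hv'
    obtain ⟨t, ht, ht'⟩ := hS3 m
    exact (adj_shadow h hu ht hu' ht').trans (ih t ht ht' v hv hv')

private lemma lift_reach {S : Set (BT G W)}
    (h2 : ∀ e : G.edgeSet, (Sum.inl (Sum.inr e) : BT G W) ∉ S ∨
      ∃ w : W, (Sum.inr (e, w) : BT G W) ∉ S)
    {a b : ↥(SVset G S)ᶜ} (hr : (G.induce (SVset G S)ᶜ).Reachable a b) :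
    ((subdivisionEdgeNC G H).induce Sᶜ).Reachable
      ⟨Sum.inl (Sum.inl a.1), a.2⟩ ⟨Sum.inl (Sum.inl b.1), b.2⟩ := by
  obtain ⟨w⟩ := hr
  induction w with
  | nil => exact Reachable.refl _
  | @cons a m b h p ih =>
    refine Reachable.trans ?_ ih
    have hadj : G.Adj a.1 m.1 := h
    rcases h2 ⟨s(a.1, m.1), hadj⟩ with hz | ⟨w', hw'⟩
    · have h1 : ((subdivisionEdgeNC G H).induce Sᶜ).Adj ⟨Sum.inl (Sum.inl a.1), a.2⟩
          ⟨Sum.inl (Sum.inr ⟨s(a.1, m.1), hadj⟩), hz⟩ := by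
        exact Sym2.mem_mk_left _ _
      have h2' : ((subdivisionEdgeNC G H).induce Sᶜ).Adj
          ⟨Sum.inl (Sum.inr ⟨s(a.1, m.1), hadj⟩), hz⟩ ⟨Sum.inl (Sum.inl m.1), m.2⟩ := by
        exact Sym2.mem_mk_right _ _
      exact h1.reachable.trans h2'.reachable
    · have h1 : ((subdivisionEdgeNC G H).induce Sᶜ).Adj ⟨Sum.inl (Sum.inl a.1), a.2⟩
          ⟨Sum.inr (⟨s(a.1, m.1), hadj⟩, w'), hw'⟩ := by
        exact Sym2.mem_mk_left _ _
      have h2' : ((subdivisionEdgeNC G H).induce Sᶜ).Adj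
          ⟨Sum.inr (⟨s(a.1, m.1), hadj⟩, w'), hw'⟩ ⟨Sum.inl (Sum.inl m.1), m.2⟩ := by
        exact Sym2.mem_mk_right _ _
      exact h1.reachable.trans h2'.reachable

private lemma big_precon {S : Set (BT G W)}
    (h1 : (G.induce (SVset G S)ᶜ).Preconnected)
    (h2 : ∀ e : G.edgeSet, (Sum.inl (Sum.inr e) : BT G W) ∉ S ∨
      ∃ w : W, (Sum.inr (e, w) : BT G W) ∉ S)
    (h3 : ∀ e : G.edgeSet, ∃ u, u ∈ (e : Sym2 V) ∧ (Sum.inl (Sum.inl u) : BT G W) ∉ S) :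
    ((subdivisionEdgeNC G H).induce Sᶜ).Preconnected := by
  have anchor : ∀ x : ↥Sᶜ, ∃ (u : V) (hu : (Sum.inl (Sum.inl u) : BT G W) ∉ S),
      ((subdivisionEdgeNC G H).induce Sᶜ).Reachable x ⟨Sum.inl (Sum.inl u), hu⟩ := by
    rintro ⟨(a | e) | ew, hx⟩
    · exact ⟨a, hx, Reachable.refl _⟩
    · obtain ⟨u, hm, hu⟩ := h3 e
      refine ⟨u, hu, Adj.reachable ?_⟩
      exact hm
    · obtain ⟨u, hm, hu⟩ := h3 ew.1
      refine ⟨u, hu, Adj.reachable ?_⟩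
      exact hm
  intro x y
  obtain ⟨u, hu, hxu⟩ := anchor x
  obtain ⟨v, hv, hyv⟩ := anchor y
  have hmid := lift_reach (H := H) h2 (h1 ⟨u, hu⟩ ⟨v, hv⟩)
  exact hxu.trans (hmid.trans hyv.symm)

private lemma big_precon_proj {S : Set (BT G W)}
    (h3 : ∀ e : G.edgeSet, ∃ u, u ∈ (e : Sym2 V) ∧ (Sum.inl (Sum.inl u) : BT G W) ∉ S)
    (hp : ((subdivisionEdgeNC G H).induce Sᶜ).Preconnected) :
    (G.induce (SVset G S)ᶜ).Preconnected := by
  have hS3 : ∀ z : ↥Sᶜ, ∃ u, u ∈ shadow G z.1 ∧ u ∈ (SVset G S)ᶜ := by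
    rintro ⟨(a | e) | ew, hz⟩
    · exact ⟨a, rfl, hz⟩
    · obtain ⟨u, hm, hu⟩ := h3 e; exact ⟨u, hm, hu⟩
    · obtain ⟨u, hm, hu⟩ := h3 ew.1; exact ⟨u, hm, hu⟩
  intro a b
  obtain ⟨w⟩ := hp ⟨Sum.inl (Sum.inl a.1), a.2⟩ ⟨Sum.inl (Sum.inl b.1), b.2⟩
  have := proj_reach_s13 hS3 w a.1 rfl a.2 b.1 rfl b.2
  exact this

private lemma Hcopy_reach {S : Set (BT G W)}
    (hnoH : ∀ (e : G.edgeSet) (w : W), (Sum.inr (e, w) : BT G W) ∉ S)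
    (e : G.edgeSet) {a b : W} (w : H.Walk a b) :
    ((subdivisionEdgeNC G H).induce Sᶜ).Reachable
      ⟨Sum.inr (e, a), hnoH e a⟩ ⟨Sum.inr (e, b), hnoH e b⟩ := by
  induction w with
  | nil => exact Reachable.refl _
  | @cons a m b h p ih =>
    refine Reachable.trans (Adj.reachable ?_) ih
    exact ⟨rfl, h⟩

private lemma comp_card [Fintype V] [Fintype W] {S : Set (BT G W)}
    (hnoH : ∀ (e : G.edgeSet) (w : W), (Sum.inr (e, w) : BT G W) ∉ S)
    (h3' : ∀ e : G.edgeSet, (Sum.inl (Sum.inr e) : BT G W) ∉ S →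
      ∃ u, u ∈ (e : Sym2 V) ∧ (Sum.inl (Sum.inl u) : BT G W) ∉ S)
    (hHp : H.Preconnected)
    (hGadj : ∀ u : V, ∃ v, G.Adj u v)
    (c : ((subdivisionEdgeNC G H).induce Sᶜ).ConnectedComponent) :
    Fintype.card W ≤
      Nat.card {v : ↥Sᶜ // ((subdivisionEdgeNC G H).induce Sᶜ).connectedComponentMk v = c} := by
  obtain ⟨x, hx⟩ := c.exists_rep
  have key : ∃ e : G.edgeSet, ∀ w : W,
      ((subdivisionEdgeNC G H).induce Sᶜ).Reachable ⟨Sum.inr (e, w), hnoH e w⟩ x := by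
    obtain ⟨(a | e) | ⟨e, w₀⟩, hx'⟩ := x
    · obtain ⟨v, hv⟩ := hGadj a
      refine ⟨⟨s(a, v), hv⟩, fun w => Adj.reachable ?_⟩
      exact Sym2.mem_mk_left _ _
    · obtain ⟨u, hm, hu⟩ := h3' e hx'
      refine ⟨e, fun w => ?_⟩
      have ha1 : ((subdivisionEdgeNC G H).induce Sᶜ).Adj ⟨Sum.inr (e, w), hnoH e w⟩
          ⟨Sum.inl (Sum.inl u), hu⟩ := hm
      have ha2 : ((subdivisionEdgeNC G H).induce Sᶜ).Adj ⟨Sum.inl (Sum.inl u), hu⟩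
          ⟨Sum.inl (Sum.inr e), hx'⟩ := hm
      exact ha1.reachable.trans ha2.reachable
    · refine ⟨e, fun w => ?_⟩
      obtain ⟨wk⟩ := hHp w w₀
      exact Hcopy_reach hnoH e wk
  obtain ⟨e, hre⟩ := key
  have hf : Function.Injective (fun w : W =>
      (⟨⟨Sum.inr (e, w), hnoH e w⟩, by rw [← hx]; exact ConnectedComponent.sound (hre w)⟩ :
        {v : ↥Sᶜ // ((subdivisionEdgeNC G H).induce Sᶜ).connectedComponentMk v = c})) := by
    intro w1 w2 hws
    have h' : (Sum.inr (e, w1) : BT G W) = Sum.inr (e, w2) :=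
      congrArg (fun t => t.1.1) hws
    simpa using h'
  calc Fintype.card W = Nat.card W := (Nat.card_eq_fintype_card).symm
    _ ≤ _ := Nat.card_le_card_of_injective _ hf

end BigGraph

section Kappa

private lemma kappaG_le {α : Type*} {G : SimpleGraph α} {g : ℕ} {S : Finset α}
    (h : IsRgVertexCut G g ↑S) : kappaG G g ≤ S.card :=
  sInf_le ⟨S, h, rfl⟩

private lemma le_kappaG {α : Type*} {G : SimpleGraph α} {g k : ℕ}
    (h : ∀ S : Finset α, IsRgVertexCut G g ↑S → k ≤ S.card) : (k : ℕ∞) ≤ kappaG G g :=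
  le_sInf (by rintro n ⟨S, hS, rfl⟩; exact_mod_cast h S hS)

private lemma kappaG_eq_of {α : Type*} {G : SimpleGraph α} {g k : ℕ}
    (hex : ∃ S : Finset α, IsRgVertexCut G g ↑S ∧ S.card = k)
    (hlb : ∀ S : Finset α, IsRgVertexCut G g ↑S → k ≤ S.card) :
    kappaG G g = (k : ℕ∞) := by
  obtain ⟨S, hS, hcard⟩ := hex
  refine le_antisymm ?_ (le_kappaG hlb)
  have := kappaG_le hS
  rwa [hcard] at this

private lemma kappa_le {α : Type*} {G : SimpleGraph α} {S : Finset α}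
    (h : IsVertexCut G ↑S) : kappa G ≤ S.card :=
  Nat.sInf_le ⟨S, h, rfl⟩

private lemma not_cut_of_lt_kappa {α : Type*} {G : SimpleGraph α} {S : Finset α}
    (h : S.card < kappa G) : ¬ IsVertexCut G ↑S :=
  fun hc => absurd (kappa_le hc) (by omega)

private lemma singleton_precon {G : SimpleGraph V} (h2 : 2 ≤ kappa G) (v : V) :
    (G.induce ({v} : Set V)ᶜ).Preconnected := by
  by_contra hnp
  refine not_cut_of_lt_kappa (G := G) (S := {v}) (by rw [Finset.card_singleton]; omega) ?_
  intro hp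
  exact hnp (by rwa [Finset.coe_singleton] at hp)

private lemma reach_two_point {G : SimpleGraph V} {a b : V} {x y : ↥({a, b} : Set V)}
    (w : (G.induce ({a, b} : Set V)).Walk x y) : G.Adj a b ∨ x = y := by
  induction w with
  | nil => exact Or.inr rfl
  | @cons x m y h p ih =>
    left
    have hadj : G.Adj x.1 m.1 := h
    have hx := x.2; have hm := m.2
    simp only [Set.mem_insert_iff, Set.mem_singleton_iff] at hx hm
    rcases hx with h1 | h1 <;> rcases hm with h2 | h2 <;> rw [h1, h2] at hadj <;>
      first
        | exact hadj
        | exact hadj.symm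
        | exact (G.loopless.irrefl _ hadj).elim

private lemma exists_cut_of_ne_top [Fintype V] [DecidableEq V] {G : SimpleGraph V}
    (hGnc : G ≠ ⊤) : ∃ A : Finset V, IsVertexCut G ↑A := by
  obtain ⟨a, b, hab, hnadj⟩ := exists_not_adj hGnc
  refine ⟨Finset.univ \ {a, b}, ?_⟩
  have hset : (↑(Finset.univ \ ({a, b} : Finset V)) : Set V)ᶜ = ({a, b} : Set V) := by
    ext x; simp; tauto
  rw [IsVertexCut, hset]
  intro hp
  obtain ⟨w⟩ := hp ⟨a, by simp⟩ ⟨b, by simp⟩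
  rcases reach_two_point w with h | h
  · exact hnadj h
  · exact hab (congrArg Subtype.val h)

end Kappa

section NoCuts

variable {G : SimpleGraph V} {H : SimpleGraph W}

private lemma edge_exists_mem (e : G.edgeSet) : ∃ u, u ∈ (e : Sym2 V) := by
  obtain ⟨e, he⟩ := e
  induction e with
  | _ a b => exact ⟨a, Sym2.mem_mk_left _ _⟩

private lemma SV_empty_precon (hGp : G.Preconnected) {S : Set (BT G W)}
    (hSV : SVset G S = ∅) : (G.induce (SVset G S)ᶜ).Preconnected := by
  rw [hSV, Set.compl_empty]
  exact (induceUnivIso G).preconnected_iff.mpr hGp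

private lemma noRg_empty (hGp : G.Preconnected) (g : ℕ) :
    ¬ IsRgVertexCut (subdivisionEdgeNC G H) g ↑(∅ : Finset (BT G W)) := by
  intro h
  apply h.1
  apply big_precon
  · apply SV_empty_precon hGp
    ext t; simp [SVset]
  · intro e; left; simp
  · intro e
    obtain ⟨u, hm⟩ := edge_exists_mem e
    exact ⟨u, hm, by simp⟩

private lemma noRg_single
    (hk1 : ∀ v : V, (G.induce ({v} : Set V)ᶜ).Preconnected)
    (hGp : G.Preconnected) (hWne : Nonempty W) (g : ℕ) (x : BT G W) :
    ¬ IsRgVertexCut (subdivisionEdgeNC G H) g ↑({x} : Finset (BT G W)) := by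
  classical
  intro h
  apply h.1
  obtain (v | e₀) | ew₀ := x
  · apply big_precon
    · have hSV : SVset G (↑({(Sum.inl (Sum.inl v) : BT G W)} : Finset (BT G W)) : Set (BT G W))
          = {v} := by
        ext t; simp [SVset]
      rw [hSV]; exact hk1 v
    · intro e; left; simp
    · intro e
      obtain ⟨u, hm, hne⟩ := edge_exists_mem_ne e v
      exact ⟨u, hm, by simp [hne]⟩
  · apply big_precon
    · apply SV_empty_precon hGp
      ext t; simp [SVset]
    · intro e
      right
      exact ⟨Classical.arbitrary W, by simp⟩
    · intro e
      obtain ⟨u, hm⟩ := edge_exists_mem e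
      exact ⟨u, hm, by simp⟩
  · apply big_precon
    · apply SV_empty_precon hGp
      ext t; simp [SVset]
    · intro e; left; simp
    · intro e
      obtain ⟨u, hm⟩ := edge_exists_mem e
      exact ⟨u, hm, by simp⟩

private lemma noRg_pair_adj [Fintype V] [Fintype W] [DecidableEq V] [DecidableEq W] {u v : V} (hadj : G.Adj u v) {g : ℕ}
    (hg : 1 ≤ g) :
    ¬ IsRgVertexCut (subdivisionEdgeNC G H) g
      ↑({Sum.inl (Sum.inl u), Sum.inl (Sum.inl v)} : Finset (BT G W)) := by
  classical
  rintro ⟨-, hcard⟩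
  have hmem : (Sum.inl (Sum.inr (⟨s(u, v), hadj⟩ : G.edgeSet)) : BT G W) ∈
      (↑({Sum.inl (Sum.inl u), Sum.inl (Sum.inl v)} : Finset (BT G W)) : Set (BT G W))ᶜ := by
    simp
  set SS : Set (BT G W) :=
    ↑({Sum.inl (Sum.inl u), Sum.inl (Sum.inl v)} : Finset (BT G W)) with hSS
  set x₀ : ↥SSᶜ := ⟨Sum.inl (Sum.inr (⟨s(u, v), hadj⟩ : G.edgeSet)), hmem⟩ with hx₀
  have hiso : ∀ z : ↥SSᶜ, ¬ ((subdivisionEdgeNC G H).induce SSᶜ).Adj x₀ z := by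
    rintro ⟨(t | f) | fw, hzmem⟩ hadj'
    · have hm : t ∈ s(u, v) := hadj'
      rw [Sym2.mem_iff] at hm
      rcases hm with rfl | rfl <;> simp [hSS] at hzmem
    · exact False.elim hadj'
    · exact False.elim hadj'
  have huniq : ∀ z : ↥SSᶜ,
      ((subdivisionEdgeNC G H).induce SSᶜ).connectedComponentMk z =
        ((subdivisionEdgeNC G H).induce SSᶜ).connectedComponentMk x₀ → z = x₀ := by
    intro z hz
    have hr : ((subdivisionEdgeNC G H).induce SSᶜ).Reachable x₀ z :=
      (ConnectedComponent.eq.mp hz).symm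
    clear hz
    obtain ⟨w'⟩ := hr
    cases w' with
    | nil => rfl
    | cons h p => exact (hiso _ h).elim
  have h1 := hcard (((subdivisionEdgeNC G H).induce SSᶜ).connectedComponentMk x₀)
  haveI hsub : Subsingleton {z : ↥SSᶜ //
      ((subdivisionEdgeNC G H).induce SSᶜ).connectedComponentMk z =
        ((subdivisionEdgeNC G H).induce SSᶜ).connectedComponentMk x₀} :=
    ⟨fun a b => Subtype.ext ((huniq a.1 a.2).trans (huniq b.1 b.2).symm)⟩
  have h2 : Nat.card {z : ↥SSᶜ //
      ((subdivisionEdgeNC G H).induce SSᶜ).connectedComponentMk z =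
        ((subdivisionEdgeNC G H).induce SSᶜ).connectedComponentMk x₀} = 1 :=
    Nat.card_of_subsingleton ⟨x₀, rfl⟩
  rw [h2] at h1
  omega

private lemma noRg_pair_mixed [DecidableEq V] [DecidableEq W]
    (hk1 : ∀ v : V, (G.induce ({v} : Set V)ᶜ).Preconnected)
    (hWne : Nonempty W) (g : ℕ) (u : V) (z : BT G W)
    (hz : ∀ t : V, z ≠ Sum.inl (Sum.inl t)) :
    ¬ IsRgVertexCut (subdivisionEdgeNC G H) g
      ↑({Sum.inl (Sum.inl u), z} : Finset (BT G W)) := by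
  classical
  intro h
  apply h.1
  apply big_precon
  · have hSV : SVset G (↑({Sum.inl (Sum.inl u), z} : Finset (BT G W)) : Set (BT G W))
        = {u} := by
      ext t
      simp only [SVset, Set.mem_setOf_eq, Finset.coe_insert, Finset.coe_singleton,
        Set.mem_insert_iff, Set.mem_singleton_iff, Sum.inl.injEq]
      constructor
      · rintro (h' | h')
        · exact h'
        · exact absurd h'.symm (hz t)
      · rintro rfl; exact Or.inl rfl
    rw [hSV]; exact hk1 u
  · intro e
    by_cases hze : z = Sum.inl (Sum.inr e)
    · right
      refine ⟨Classical.arbitrary W, ?_⟩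
      subst hze; simp
    · left
      intro hmemc
      simp only [Finset.coe_insert, Set.mem_insert_iff, Finset.coe_singleton,
        Set.mem_singleton_iff] at hmemc
      rcases hmemc with h' | h'
      · simp at h'
      · exact hze h'.symm
  · intro e
    obtain ⟨t, hm, hne⟩ := edge_exists_mem_ne e u
    refine ⟨t, hm, ?_⟩
    intro hmemc
    simp only [Finset.coe_insert, Set.mem_insert_iff, Finset.coe_singleton,
      Set.mem_singleton_iff] at hmemc
    rcases hmemc with h' | h'
    · exact hne (by simpa using h')
    · exact hz t h'.symm

private lemma noRg_pair_nonG [DecidableEq V] [DecidableEq W] (hGp : G.Preconnected) {w₁ w₂ : W} (hw : w₁ ≠ w₂) (g : ℕ)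
    (x y : BT G W) (hx : ∀ t : V, x ≠ Sum.inl (Sum.inl t))
    (hy : ∀ t : V, y ≠ Sum.inl (Sum.inl t)) :
    ¬ IsRgVertexCut (subdivisionEdgeNC G H) g ↑({x, y} : Finset (BT G W)) := by
  classical
  intro h
  apply h.1
  apply big_precon
  · apply SV_empty_precon hGp
    ext t
    simp only [SVset, Set.mem_setOf_eq, Finset.coe_insert, Set.mem_insert_iff,
      Finset.coe_singleton, Set.mem_singleton_iff, Set.mem_empty_iff_false, iff_false]
    rintro (h' | h')
    · exact hx t h'.symm
    · exact hy t h'.symm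
  · intro e
    by_cases hin : (Sum.inl (Sum.inr e) : BT G W) ∈ ({x, y} : Finset (BT G W))
    · right
      by_contra hno
      push_neg at hno
      have h1 := hno w₁
      have h2 := hno w₂
      rw [Finset.mem_coe, Finset.mem_insert, Finset.mem_singleton] at h1 h2
      rw [Finset.mem_insert, Finset.mem_singleton] at hin
      rcases hin with hin | hin
      · rcases h1 with h1 | h1
        · rw [← hin] at h1; simp at h1
        · rcases h2 with h2 | h2
          · rw [← hin] at h2; simp at h2
          · obtain ⟨-, hww⟩ : e = e ∧ w₁ = w₂ := by simpa using h1.trans h2.symm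
            exact hw hww
      · rcases h1 with h1 | h1
        · rcases h2 with h2 | h2
          · obtain ⟨-, hww⟩ : e = e ∧ w₁ = w₂ := by simpa using h1.trans h2.symm
            exact hw hww
          · rw [← hin] at h2; simp at h2
        · rw [← hin] at h1; simp at h1
    · left
      exact fun hc => hin (by simpa using hc)
  · intro e
    obtain ⟨t, hm⟩ := edge_exists_mem e
    refine ⟨t, hm, ?_⟩
    intro hmemc
    simp only [Finset.coe_insert, Set.mem_insert_iff, Finset.coe_singleton,
      Set.mem_singleton_iff] at hmemc
    rcases hmemc with h' | h'
    · exact hx t h'.symm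
    · exact hy t h'.symm

private lemma noRg_pair [Fintype V] [Fintype W] [DecidableEq V] [DecidableEq W]
    (hk1 : ∀ v : V, (G.induce ({v} : Set V)ᶜ).Preconnected)
    (hk2 : ∀ u v : V, u ≠ v → ¬ G.Adj u v → (G.induce ({u, v} : Set V)ᶜ).Preconnected)
    (hGp : G.Preconnected) {w₁ w₂ : W} (hw : w₁ ≠ w₂) {g : ℕ} (hg : 1 ≤ g)
    (x y : BT G W) (hxy : x ≠ y) :
    ¬ IsRgVertexCut (subdivisionEdgeNC G H) g ↑({x, y} : Finset (BT G W)) := by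
  classical
  have hWne : Nonempty W := ⟨w₁⟩
  have hmixed := fun (u : V) (z : BT G W) (hz : ∀ t : V, z ≠ Sum.inl (Sum.inl t)) =>
    noRg_pair_mixed (H := H) hk1 hWne g u z hz
  obtain (u | e) | ew := x <;> obtain (v | f) | fw := y
  · -- both G-vertices
    have hne : u ≠ v := by rintro rfl; exact hxy rfl
    by_cases hadj : G.Adj u v
    · exact noRg_pair_adj hadj hg
    · intro h
      apply h.1
      apply big_precon
      · have hSV : SVset G
            (↑({Sum.inl (Sum.inl u), Sum.inl (Sum.inl v)} : Finset (BT G W)) : Set (BT G W))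
            = {u, v} := by
          ext t; simp [SVset]
        rw [hSV]; exact hk2 u v hne hadj
      · intro e; left; simp
      · intro e
        have hnee : (e : Sym2 V) ≠ s(u, v) := by
          intro hc
          exact hadj (by rw [← SimpleGraph.mem_edgeSet, ← hc]; exact e.2)
        obtain ⟨t, hm, ht1, ht2⟩ := edge_avoid_pair e hnee
        exact ⟨t, hm, by simp [ht1, ht2]⟩
  · exact hmixed u _ (by simp)
  · exact hmixed u _ (by simp)
  · rw [Finset.pair_comm]; exact hmixed v _ (by simp)
  · exact noRg_pair_nonG hGp hw g _ _ (by simp) (by simp)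
  · exact noRg_pair_nonG hGp hw g _ _ (by simp) (by simp)
  · rw [Finset.pair_comm]; exact hmixed v _ (by simp)
  · exact noRg_pair_nonG hGp hw g _ _ (by simp) (by simp)
  · exact noRg_pair_nonG hGp hw g _ _ (by simp) (by simp)

end NoCuts

section Cuts

variable {G : SimpleGraph V} {H : SimpleGraph W}

private lemma cutV_RgCut [Fintype V] [Fintype W] [DecidableEq V] [DecidableEq W]
    (hHp : H.Preconnected) (hGadj : ∀ u : V, ∃ v, G.Adj u v)
    {g m : ℕ} (hm : Fintype.card W = m) (hg2 : g + 1 ≤ m) (A : Finset V)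
    (hcut : ¬ (G.induce (↑A : Set V)ᶜ).Preconnected)
    (hh3 : ∀ e : G.edgeSet, ∃ t, t ∈ (e : Sym2 V) ∧ t ∉ A) :
    IsRgVertexCut (subdivisionEdgeNC G H) g
      ↑(A.image (fun v => (Sum.inl (Sum.inl v) : BT G W))) := by
  have hSV : SVset G
      (↑(A.image (fun v => (Sum.inl (Sum.inl v) : BT G W))) : Set (BT G W)) = ↑A := by
    ext t; simp [SVset]
  have h3 : ∀ e : G.edgeSet, ∃ u, u ∈ (e : Sym2 V) ∧
      (Sum.inl (Sum.inl u) : BT G W) ∉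
        (↑(A.image (fun v => (Sum.inl (Sum.inl v) : BT G W))) : Set (BT G W)) := by
    intro e
    obtain ⟨t, hm', ht⟩ := hh3 e
    exact ⟨t, hm', by simp [ht]⟩
  constructor
  · intro hp
    have := big_precon_proj h3 hp
    rw [hSV] at this
    exact hcut this
  · intro c
    have := comp_card (S := ↑(A.image (fun v => (Sum.inl (Sum.inl v) : BT G W))))
      (by intro e w; simp) (fun e _ => h3 e) hHp hGadj c
    rw [hm] at this
    exact le_trans hg2 this

private lemma three_cut [Fintype V] [Fintype W] [DecidableEq V] [DecidableEq W]
    (hGconn : G.Connected) (hGnc : G ≠ ⊤) (hHp : H.Preconnected) (hWne : Nonempty W)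
    {g m : ℕ} (hm : Fintype.card W = m) (hg2 : g + 1 ≤ m)
    {u v : V} (hadj : G.Adj u v) :
    IsRgVertexCut (subdivisionEdgeNC G H) g
      ↑({Sum.inl (Sum.inl u), Sum.inl (Sum.inl v),
          Sum.inl (Sum.inr (⟨s(u, v), hadj⟩ : G.edgeSet))} : Finset (BT G W)) := by
  set e₀ : G.edgeSet := ⟨s(u, v), hadj⟩ with he₀
  set SS : Finset (BT G W) :=
    {Sum.inl (Sum.inl u), Sum.inl (Sum.inl v), Sum.inl (Sum.inr e₀)} with hSS
  constructor
  · -- not preconnected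
    obtain ⟨b, hbu, hbv⟩ := exists_ne_pair hGconn hGnc u v
    obtain ⟨w₀⟩ := hWne
    have hx₀mem : (Sum.inr (e₀, w₀) : BT G W) ∈ (↑SS : Set (BT G W))ᶜ := by simp [hSS]
    have hy₀mem : (Sum.inl (Sum.inl b) : BT G W) ∈ (↑SS : Set (BT G W))ᶜ := by
      simp [hSS, hbu, hbv]
    intro hp
    have hinv : ∀ {s t : ↥(↑SS : Set (BT G W))ᶜ}
        (w : ((subdivisionEdgeNC G H).induce (↑SS : Set (BT G W))ᶜ).Walk s t),
        (∃ ww : W, s.1 = Sum.inr (e₀, ww)) → ∃ ww : W, t.1 = Sum.inr (e₀, ww) := by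
      intro s t w
      induction w with
      | nil => exact id
      | @cons s mid t h p ih =>
        intro hs
        apply ih
        obtain ⟨ww, hsw⟩ := hs
        have hadj' : (subdivisionEdgeNC G H).Adj s.1 mid.1 := h
        rw [hsw] at hadj'
        obtain ⟨(c | f) | ⟨f, wx⟩, hmid⟩ := mid
        · have hc : c ∈ s(u, v) := hadj'
          rw [Sym2.mem_iff] at hc
          exfalso
          rcases hc with rfl | rfl <;> simp [hSS] at hmid
        · exact False.elim hadj'
        · have hef : e₀ = f ∧ H.Adj ww wx := hadj'
          exact ⟨wx, by rw [hef.1]⟩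
    obtain ⟨w⟩ := hp ⟨Sum.inr (e₀, w₀), hx₀mem⟩ ⟨Sum.inl (Sum.inl b), hy₀mem⟩
    obtain ⟨ww, hcontra⟩ := hinv w ⟨w₀, rfl⟩
    simp at hcontra
  · intro c
    have hnoH : ∀ (e : G.edgeSet) (w : W), (Sum.inr (e, w) : BT G W) ∉ (↑SS : Set (BT G W)) := by
      intro e w; simp [hSS]
    have h3' : ∀ e : G.edgeSet, (Sum.inl (Sum.inr e) : BT G W) ∉ (↑SS : Set (BT G W)) →
        ∃ t, t ∈ (e : Sym2 V) ∧ (Sum.inl (Sum.inl t) : BT G W) ∉ (↑SS : Set (BT G W)) := by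
      intro e he
      have hne : (e : Sym2 V) ≠ s(u, v) := by
        intro hc
        apply he
        have he' : e = e₀ := Subtype.ext (by rw [hc])
        simp [hSS, he']
      obtain ⟨t, hmm, ht1, ht2⟩ := edge_avoid_pair e hne
      exact ⟨t, hmm, by simp [hSS, ht1, ht2]⟩
    have := comp_card (S := (↑SS : Set (BT G W))) hnoH h3' hHp
      (exists_adj_of_ne_top hGconn hGnc) c
    rw [hm] at this
    exact le_trans hg2 this

private lemma lb_two [Fintype V] [Fintype W]
    (hk1 : ∀ v : V, (G.induce ({v} : Set V)ᶜ).Preconnected)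
    (hGp : G.Preconnected) (hWne : Nonempty W) {g : ℕ} :
    ∀ S : Finset (BT G W), IsRgVertexCut (subdivisionEdgeNC G H) g ↑S → 2 ≤ S.card := by
  classical
  intro S hS
  by_contra hlt
  push_neg at hlt
  have hc : S.card = 0 ∨ S.card = 1 := by omega
  rcases hc with hc | hc
  · rw [Finset.card_eq_zero] at hc
    subst hc
    exact noRg_empty hGp g hS
  · obtain ⟨x, rfl⟩ := Finset.card_eq_one.mp hc
    exact noRg_single hk1 hGp hWne g x hS

private lemma lb_three [Fintype V] [Fintype W]
    (hk1 : ∀ v : V, (G.induce ({v} : Set V)ᶜ).Preconnected)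
    (hk2 : ∀ u v : V, u ≠ v → ¬ G.Adj u v → (G.induce ({u, v} : Set V)ᶜ).Preconnected)
    (hGp : G.Preconnected) {w₁ w₂ : W} (hw : w₁ ≠ w₂) {g : ℕ} (hg : 1 ≤ g) :
    ∀ S : Finset (BT G W), IsRgVertexCut (subdivisionEdgeNC G H) g ↑S → 3 ≤ S.card := by
  classical
  intro S hS
  by_contra hlt
  push_neg at hlt
  have hc : S.card = 0 ∨ S.card = 1 ∨ S.card = 2 := by omega
  rcases hc with hc | hc | hc
  · rw [Finset.card_eq_zero] at hc
    subst hc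
    exact noRg_empty hGp g hS
  · obtain ⟨x, rfl⟩ := Finset.card_eq_one.mp hc
    exact noRg_single hk1 hGp ⟨w₁⟩ g x hS
  · obtain ⟨x, y, hxy, rfl⟩ := Finset.card_eq_two.mp hc
    exact noRg_pair hk1 hk2 hGp hw hg x y hxy hS

end Cuts

theorem subdivisionEdgeNC_kappaG_small {V W : Type*} [Fintype V] [Fintype W] [DecidableEq V]
    (G : SimpleGraph V) (H : SimpleGraph W)
    (hGconn : G.Connected) (hGnc : G ≠ ⊤) (hHconn : H.Connected)
    (m : ℕ) (hm : Fintype.card W = m) (g : ℕ) (hg1 : 1 ≤ g) (hg2 : g + 1 ≤ m) :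
    (kappaG (subdivisionEdgeNC G H) g = 1 ↔ kappa G = 1) ∧
    ((kappa G = 2 ∧ ∃ u v : V, u ≠ v ∧ ¬ G.Adj u v ∧ IsMinVertexCut G {u, v}) →
      kappaG (subdivisionEdgeNC G H) g = 2) ∧
    ((kappa G = 2 ∧ ∀ A : Finset V, IsMinVertexCut G A →
        ∃ u v : V, G.Adj u v ∧ A = {u, v}) →
      kappaG (subdivisionEdgeNC G H) g = 3) ∧
    (3 ≤ kappa G → kappaG (subdivisionEdgeNC G H) g = 3) := by
  classical
  have hGp : G.Preconnected := hGconn.preconnected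
  have hHp : H.Preconnected := hHconn.preconnected
  have hGadj : ∀ u : V, ∃ v, G.Adj u v := exists_adj_of_ne_top hGconn hGnc
  haveI hWnt : Nontrivial W := Fintype.one_lt_card_iff_nontrivial.mp (by omega)
  obtain ⟨w₁, w₂, hw⟩ := exists_pair_ne W
  have hWne : Nonempty W := ⟨w₁⟩
  have hιinj : Function.Injective (fun v : V => (Sum.inl (Sum.inl v) : BT G W)) := by
    intro a b hab; simpa using hab
  have hκ0 : ¬ IsVertexCut G ↑(∅ : Finset V) := by
    intro hcut
    apply hcut
    rw [Finset.coe_empty, Set.compl_empty]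
    exact (induceUnivIso G).preconnected_iff.mpr hGp
  have hcutex : ∃ A : Finset V, IsVertexCut G ↑A := exists_cut_of_ne_top hGnc
  have hκmem : ∃ A : Finset V, IsVertexCut G ↑A ∧ A.card = kappa G := by
    have hne : {n : ℕ | ∃ S : Finset V, IsVertexCut G ↑S ∧ S.card = n}.Nonempty :=
      ⟨hcutex.choose.card, hcutex.choose, hcutex.choose_spec, rfl⟩
    exact Nat.sInf_mem hne
  have hκne0 : kappa G ≠ 0 := by
    intro h0
    obtain ⟨A, hA, hAc⟩ := hκmem
    rw [h0, Finset.card_eq_zero] at hAc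
    subst hAc
    exact hκ0 hA
  have upper3 : kappaG (subdivisionEdgeNC G H) g ≤ ((3 : ℕ) : ℕ∞) := by
    obtain ⟨u₀⟩ := hGconn.nonempty
    obtain ⟨v₀, hadj₀⟩ := hGadj u₀
    have hRg := three_cut (H := H) hGconn hGnc hHp hWne hm hg2 hadj₀
    have hcard3 : ({Sum.inl (Sum.inl u₀), Sum.inl (Sum.inl v₀),
        Sum.inl (Sum.inr (⟨s(u₀, v₀), hadj₀⟩ : G.edgeSet))} : Finset (BT G W)).card = 3 := by
      rw [Finset.card_eq_three]
      exact ⟨_, _, _, by simp [hadj₀.ne], by simp, by simp, rfl⟩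
    have := kappaG_le hRg
    rwa [hcard3] at this
  have eq3 : ∀ (_ : ∀ v : V, (G.induce ({v} : Set V)ᶜ).Preconnected)
      (_ : ∀ a b : V, a ≠ b → ¬ G.Adj a b → (G.induce ({a, b} : Set V)ᶜ).Preconnected),
      kappaG (subdivisionEdgeNC G H) g = 3 := by
    intro hk1 hk2
    have hlow := le_kappaG (lb_three (H := H) hk1 hk2 hGp hw hg1)
    have heq := le_antisymm upper3 hlow
    rw [heq]
    norm_num
  refine ⟨⟨?_, ?_⟩, ?_, ?_, ?_⟩
  · -- kappaG = 1 → kappa = 1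
    intro h1
    by_contra hne1
    have h2 : 2 ≤ kappa G := by omega
    have hk1 := singleton_precon h2
    have hlow := le_kappaG (lb_two (H := H) hk1 hGp hWne (g := g))
    rw [h1] at hlow
    norm_num at hlow
  · -- kappa = 1 → kappaG = 1
    intro h1
    obtain ⟨A, hA, hAc⟩ := hκmem
    rw [h1] at hAc
    obtain ⟨v, rfl⟩ := Finset.card_eq_one.mp hAc
    have hh3 : ∀ e : G.edgeSet, ∃ t, t ∈ (e : Sym2 V) ∧ t ∉ ({v} : Finset V) := by
      intro e
      obtain ⟨t, hmm, htv⟩ := edge_exists_mem_ne e v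
      exact ⟨t, hmm, by simp [htv]⟩
    have hRg := cutV_RgCut (H := H) hHp hGadj hm hg2 {v} hA hh3
    have hlb : ∀ S : Finset (BT G W), IsRgVertexCut (subdivisionEdgeNC G H) g ↑S →
        1 ≤ S.card := by
      intro S hS
      by_contra hlt
      push_neg at hlt
      have hS0 : S = ∅ := by
        rw [← Finset.card_eq_zero]; omega
      subst hS0
      exact noRg_empty hGp g hS
    have heq := kappaG_eq_of ⟨_, hRg, by simp⟩ hlb
    rw [heq]
    norm_num
  · -- kappa = 2 with nonadjacent min cut
    rintro ⟨hκ2, u, v, huv, hnadj, hmin⟩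
    have h2 : 2 ≤ kappa G := le_of_eq hκ2.symm
    have hk1 := singleton_precon h2
    have hh3 : ∀ e : G.edgeSet, ∃ t, t ∈ (e : Sym2 V) ∧ t ∉ ({u, v} : Finset V) := by
      intro e
      have hne : (e : Sym2 V) ≠ s(u, v) := fun hc =>
        hnadj (by rw [← SimpleGraph.mem_edgeSet, ← hc]; exact e.2)
      obtain ⟨t, hmm, ht1, ht2⟩ := edge_avoid_pair e hne
      exact ⟨t, hmm, by simp [ht1, ht2]⟩
    have hRg := cutV_RgCut (H := H) hHp hGadj hm hg2 {u, v} hmin.1 hh3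
    have hcard2 : (({u, v} : Finset V).image
        (fun v => (Sum.inl (Sum.inl v) : BT G W))).card = 2 := by
      rw [Finset.card_image_of_injective _ hιinj, Finset.card_pair huv]
    have heq := kappaG_eq_of ⟨_, hRg, hcard2⟩ (fun S hS => lb_two hk1 hGp hWne S hS)
    rw [heq]
    norm_num
  · -- kappa = 2, all min cuts adjacent
    rintro ⟨hκ2, hall⟩
    have h2 : 2 ≤ kappa G := le_of_eq hκ2.symm
    have hk1 := singleton_precon h2
    refine eq3 hk1 ?_
    intro a b hab hnadj
    by_contra hnp
    have hcut : IsVertexCut G ↑({a, b} : Finset V) := by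
      intro hp
      apply hnp
      rwa [Finset.coe_insert, Finset.coe_singleton] at hp
    have hmincut : IsMinVertexCut G {a, b} := ⟨hcut, by rw [Finset.card_pair hab, hκ2]⟩
    obtain ⟨a', b', hadj', heq'⟩ := hall _ hmincut
    exact hnadj (adj_of_pair_eq hadj' hab heq')
  · -- kappa ≥ 3
    intro hκ3
    have h2 : 2 ≤ kappa G := by omega
    have hk1 := singleton_precon h2
    refine eq3 hk1 ?_
    intro a b hab hnadj
    by_contra hnp
    have hcut : IsVertexCut G ↑({a, b} : Finset V) := by
      intro hp
      apply hnp
      rwa [Finset.coe_insert, Finset.coe_singleton] at hp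
    have := kappa_le hcut
    rw [Finset.card_pair hab] at this
    omega


end ExtraConn
end
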